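/- Let n ≥ 1, let 0 < τ₁ < τ₂ be temperatures with τ_δ = 1/τ₁ − 1/τ₂, let L ∈ ℝ^{n×n} be symmetric positive semidefinite with positive semidefinite square root √L, let c ≥ 0, let U : ℝⁿ → ℝ be continuously differentiable with exp(−U(x)/τ₁ − U(y)/τ₂) Lebesgue integrable, and let μ be the probability measure on ℝⁿ × ℝⁿ with density proportional to π(x,y) = exp(−U(x)/τ₁ − U(y)/τ₂). Then for every twice continuously differentiable compactly supported f : ℝⁿ × ℝⁿ → ℝ, the Dirichlet form 𝓔ᶜ(f) = ∫ Γᶜ(f) dμ decomposes as 𝓔ᶜ(f) = ∫ ( τ₁ ‖√L ∇ₓf(x,y)‖² + τ₂ ‖√L ∇_yf(x,y)‖² ) dμ(x,y) + ∫ (c/2) s(x,y) (f(y,x) − f(x,y))² dμ(x,y), and both summands are nonnegative. -/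

import Mathlib

open MeasureTheory Matrix

/-- The swap function `s(x,y) = min{1, exp(τ_δ (U(x) − U(y)))}` with `τ_δ = 1/τ₁ − 1/τ₂`. -/
noncomputable def swapS {n : ℕ} (τ₁ τ₂ : ℝ) (U : (Fin n → ℝ) → ℝ) (x y : Fin n → ℝ) : ℝ :=
  min 1 (Real.exp ((1 / τ₁ - 1 / τ₂) * (U x - U y)))

/-- The joint density `π(x,y) = exp(−U(x)/τ₁ − U(y)/τ₂)`. -/
noncomputable def jointDensity {n : ℕ} (τ₁ τ₂ : ℝ) (U : (Fin n → ℝ) → ℝ)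
    (x y : Fin n → ℝ) : ℝ :=
  Real.exp (-(U x) / τ₁ - U y / τ₂)

/-- The gradient vector of `h : ℝⁿ → ℝ` at `x`, with components `∂h/∂x_i(x)`. -/
noncomputable def gradVec {n : ℕ} (h : (Fin n → ℝ) → ℝ) (x : Fin n → ℝ) : Fin n → ℝ :=
  fun i => fderiv ℝ h x (Pi.single i 1)

/-- The generator `𝓛ᶜ` of the replica exchange preconditioned Langevin jump process. -/
noncomputable def repGen {n : ℕ} (L : Matrix (Fin n) (Fin n) ℝ) (τ₁ τ₂ c : ℝ)
    (U : (Fin n → ℝ) → ℝ) (f : (Fin n → ℝ) → (Fin n → ℝ) → ℝ) (x y : Fin n → ℝ) : ℝ :=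
  -((L.mulVec (gradVec U x)) ⬝ᵥ (gradVec (fun x' => f x' y) x))
    + τ₁ * ∑ i, ∑ j, L i j *
        gradVec (fun x' => gradVec (fun x'' => f x'' y) x' j) x i
    - (L.mulVec (gradVec U y)) ⬝ᵥ (gradVec (f x) y)
    + τ₂ * ∑ i, ∑ j, L i j *
        gradVec (fun y' => gradVec (f x) y' j) y i
    + c * swapS τ₁ τ₂ U x y * (f y x - f x y)

/-- The Carré du Champ operator `Γᶜ(f) = (1/2)𝓛ᶜ(f²) − f 𝓛ᶜ(f)`. -/
noncomputable def carreDuChamp {n : ℕ} (L : Matrix (Fin n) (Fin n) ℝ) (τ₁ τ₂ c : ℝ)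
    (U : (Fin n → ℝ) → ℝ) (f : (Fin n → ℝ) → (Fin n → ℝ) → ℝ) (x y : Fin n → ℝ) : ℝ :=
  (1 / 2) * repGen L τ₁ τ₂ c U (fun x' y' => (f x' y') ^ 2) x y
    - f x y * repGen L τ₁ τ₂ c U f x y

/-! ### Auxiliary lemmas -/

lemma gradVec_sq {n : ℕ} (h : (Fin n → ℝ) → ℝ) (x : Fin n → ℝ)
    (hh : DifferentiableAt ℝ h x) (j : Fin n) :
    gradVec (fun x' => (h x') ^ 2) x j = 2 * h x * gradVec h x j := by
  unfold gradVec
  have e : (fun x' => (h x') ^ 2) = fun x' => h x' * h x' := by funext z; ring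
  rw [e, fderiv_fun_mul hh hh]
  simp; ring

lemma gradVec_mul {n : ℕ} (u v : (Fin n → ℝ) → ℝ) (x : Fin n → ℝ)
    (hu : DifferentiableAt ℝ u x) (hv : DifferentiableAt ℝ v x) (i : Fin n) :
    gradVec (fun x' => u x' * v x') x i = u x * gradVec v x i + v x * gradVec u x i := by
  unfold gradVec
  rw [fderiv_fun_mul hu hv]; simp

lemma contDiff_gradVec {n : ℕ} (h : (Fin n → ℝ) → ℝ) (hh : ContDiff ℝ 2 h) (j : Fin n) :
    ContDiff ℝ 1 (fun x' => gradVec h x' j) := by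
  unfold gradVec
  exact (ContinuousLinearMap.apply ℝ ℝ (Pi.single j 1)).contDiff.comp
    (hh.fderiv_right (m := 1) (by norm_num))

lemma gradVec_gradVec_sq {n : ℕ} (h : (Fin n → ℝ) → ℝ) (hh : ContDiff ℝ 2 h)
    (x : Fin n → ℝ) (i j : Fin n) :
    gradVec (fun x' => gradVec (fun x'' => (h x'') ^ 2) x' j) x i
      = 2 * gradVec h x i * gradVec h x j
        + 2 * h x * gradVec (fun x' => gradVec h x' j) x i := by
  have hd : Differentiable ℝ h := hh.differentiable (by norm_num)
  have e : (fun x' => gradVec (fun x'' => (h x'') ^ 2) x' j)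
      = fun x' => (2 * h x') * gradVec h x' j := by
    funext z; rw [gradVec_sq h z (hd z) j]
  rw [e, gradVec_mul _ _ x ((hd x).const_mul 2)
    (((contDiff_gradVec h hh j).differentiable one_ne_zero) x) i]
  have e2 : gradVec (fun x' => 2 * h x') x i = 2 * gradVec h x i := by
    unfold gradVec
    rw [fderiv_const_mul (hd x)]; simp
  rw [e2]; ring

lemma dot_fun_mul {n : ℕ} (a b : Fin n → ℝ) (t : ℝ) :
    a ⬝ᵥ (fun j => t * b j) = t * (a ⬝ᵥ b) := by
  simp [dotProduct, Finset.mul_sum, mul_left_comm]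

lemma sum_split {n : ℕ} (L : Matrix (Fin n) (Fin n) ℝ) (a H : Fin n → Fin n → ℝ) (t : ℝ) :
    ∑ i, ∑ j, L i j * (2 * a i i * a j j + 2 * t * H i j)
      = 2 * (∑ i, ∑ j, L i j * a i i * a j j) + 2 * t * ∑ i, ∑ j, L i j * H i j := by
  simp only [mul_add, Finset.sum_add_distrib, Finset.mul_sum]
  congr 1 <;> refine Finset.sum_congr rfl fun i _ => Finset.sum_congr rfl fun j _ => by ring

/-- Pointwise identity for the Carré du Champ operator. -/
lemma carre_eq {n : ℕ} (L : Matrix (Fin n) (Fin n) ℝ) (τ₁ τ₂ c : ℝ)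
    (U : (Fin n → ℝ) → ℝ) (f : (Fin n → ℝ) → (Fin n → ℝ) → ℝ)
    (hf : ContDiff ℝ 2 (Function.uncurry f)) (x y : Fin n → ℝ) :
    carreDuChamp L τ₁ τ₂ c U f x y
      = τ₁ * ∑ i, ∑ j, L i j * gradVec (fun x' => f x' y) x i * gradVec (fun x' => f x' y) x j
        + τ₂ * ∑ i, ∑ j, L i j * gradVec (f x) y i * gradVec (f x) y j
        + (c / 2) * swapS τ₁ τ₂ U x y * (f y x - f x y) ^ 2 := by
  have h1 : ContDiff ℝ 2 (fun x' => f x' y) :=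
    hf.comp (contDiff_id.prodMk contDiff_const)
  have h2 : ContDiff ℝ 2 (f x) :=
    hf.comp (contDiff_const.prodMk contDiff_id)
  have h1d : Differentiable ℝ (fun x' => f x' y) := h1.differentiable (by norm_num)
  have h2d : Differentiable ℝ (f x) := h2.differentiable (by norm_num)
  have ev1 : gradVec (fun x' => (f x' y) ^ 2) x
      = fun j => 2 * f x y * gradVec (fun x' => f x' y) x j := by
    funext j; exact gradVec_sq _ x (h1d x) j
  have ev2 : gradVec (fun y' => (f x y') ^ 2) y
      = fun j => 2 * f x y * gradVec (f x) y j := by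
    funext j; exact gradVec_sq _ y (h2d y) j
  have s1 : ∑ i, ∑ j, L i j *
        gradVec (fun x' => gradVec (fun x'' => (f x'' y) ^ 2) x' j) x i
      = 2 * (∑ i, ∑ j, L i j * gradVec (fun x' => f x' y) x i * gradVec (fun x' => f x' y) x j)
        + 2 * f x y * ∑ i, ∑ j, L i j *
            gradVec (fun x' => gradVec (fun x'' => f x'' y) x' j) x i := by
    rw [← sum_split L (fun i j => gradVec (fun x' => f x' y) x i) _ (f x y)]
    refine Finset.sum_congr rfl fun i _ => Finset.sum_congr rfl fun j _ => ?_
    exact congrArg (fun t => L i j * t) (gradVec_gradVec_sq _ h1 x i j)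
  have s2 : ∑ i, ∑ j, L i j *
        gradVec (fun y' => gradVec (fun y'' => (f x y'') ^ 2) y' j) y i
      = 2 * (∑ i, ∑ j, L i j * gradVec (f x) y i * gradVec (f x) y j)
        + 2 * f x y * ∑ i, ∑ j, L i j *
            gradVec (fun y' => gradVec (f x) y' j) y i := by
    rw [← sum_split L (fun i j => gradVec (f x) y i) _ (f x y)]
    refine Finset.sum_congr rfl fun i _ => Finset.sum_congr rfl fun j _ => ?_
    exact congrArg (fun t => L i j * t) (gradVec_gradVec_sq _ h2 y i j)
  simp only [carreDuChamp, repGen]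
  rw [ev1, ev2, dot_fun_mul, dot_fun_mul, s1, s2]
  ring

lemma triple_swap {α : Type*} [Fintype α] (g : α → α → α → ℝ) :
    ∑ i, ∑ j, ∑ k, g i j k = ∑ k, ∑ i, ∑ j, g i j k := by
  calc ∑ i, ∑ j, ∑ k, g i j k = ∑ i, ∑ k, ∑ j, g i j k :=
        Finset.sum_congr rfl fun i _ => Finset.sum_comm
    _ = ∑ k, ∑ i, ∑ j, g i j k := Finset.sum_comm

/-- Quadratic form of `S * S` as a sum of squares. -/
lemma quad_sqrt {n : ℕ} (S : Matrix (Fin n) (Fin n) ℝ) (hS : S.IsHermitian) (v : Fin n → ℝ) :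
    ∑ i, ∑ j, (S * S) i j * v i * v j = ∑ i, (S.mulVec v i) ^ 2 := by
  have hsymm : ∀ i j, S i j = S j i := fun i j => by
    have := congrFun (congrFun hS j) i
    simpa [Matrix.conjTranspose_apply] using this
  calc ∑ i, ∑ j, (S * S) i j * v i * v j
      = ∑ i, ∑ j, ∑ k, S i k * S k j * v i * v j := by
        simp only [Matrix.mul_apply, Finset.sum_mul]
    _ = ∑ k, ∑ i, ∑ j, S i k * S k j * v i * v j := triple_swap _
    _ = ∑ k, ∑ i, ∑ j, (S k i * v i) * (S k j * v j) := by
        refine Finset.sum_congr rfl fun k _ => Finset.sum_congr rfl fun i _ =>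
          Finset.sum_congr rfl fun j _ => ?_
        rw [hsymm i k]; ring
    _ = ∑ i, (S.mulVec v i) ^ 2 := by
        refine Finset.sum_congr rfl fun k _ => ?_
        rw [sq, Matrix.mulVec, dotProduct, Finset.sum_mul_sum]

/-- Partial gradient in the first variable via the full derivative. -/
lemma gradVec_fst {n : ℕ} (f : (Fin n → ℝ) → (Fin n → ℝ) → ℝ)
    (hF : Differentiable ℝ (Function.uncurry f)) (x y : Fin n → ℝ) (j : Fin n) :
    gradVec (fun x' => f x' y) x j
      = fderiv ℝ (Function.uncurry f) (x, y) (Pi.single j 1, 0) := by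
  have h : HasFDerivAt (fun x' => f x' y)
      ((fderiv ℝ (Function.uncurry f) (x, y)).comp
        ((ContinuousLinearMap.id ℝ (Fin n → ℝ)).prod 0)) x :=
    by have := (hF (x, y)).hasFDerivAt.comp x (HasFDerivAt.prodMk (hasFDerivAt_id (𝕜 := ℝ) x) (hasFDerivAt_const y x) :
      HasFDerivAt (fun x' => (x', y)) _ x); exact this
  unfold gradVec
  rw [h.fderiv]
  simp

/-- Partial gradient in the second variable via the full derivative. -/
lemma gradVec_snd {n : ℕ} (f : (Fin n → ℝ) → (Fin n → ℝ) → ℝ)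
    (hF : Differentiable ℝ (Function.uncurry f)) (x y : Fin n → ℝ) (j : Fin n) :
    gradVec (f x) y j
      = fderiv ℝ (Function.uncurry f) (x, y) (0, Pi.single j 1) := by
  have h : HasFDerivAt (fun y' => f x y')
      ((fderiv ℝ (Function.uncurry f) (x, y)).comp
        ((0 : (Fin n → ℝ) →L[ℝ] (Fin n → ℝ)).prod (ContinuousLinearMap.id ℝ (Fin n → ℝ)))) y :=
    (hF (x, y)).hasFDerivAt.comp y (HasFDerivAt.prodMk (hasFDerivAt_const x y) (hasFDerivAt_id y))
  unfold gradVec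
  rw [show (f x) = fun y' => f x y' from rfl, h.fderiv]
  simp

/-- Decomposition of the Dirichlet form `𝓔ᶜ(f) = ∫ Γᶜ(f) dμ` of the replica exchange
preconditioned Langevin generator into a nonnegative diffusion part and a nonnegative
swap part, where `μ` is the probability measure with density proportional to
`π(x,y) = exp(−U(x)/τ₁ − U(y)/τ₂)`. -/
theorem dirichlet_form_decomposition (n : ℕ) (hn : 1 ≤ n)
    (τ₁ τ₂ : ℝ) (hτ₁ : 0 < τ₁) (hτ₁₂ : τ₁ < τ₂)
    (L sqrtL : Matrix (Fin n) (Fin n) ℝ) (hL : L.PosSemidef)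
    (hsqrtL : sqrtL.PosSemidef) (hsq : sqrtL * sqrtL = L)
    (c : ℝ) (hc : 0 ≤ c)
    (U : (Fin n → ℝ) → ℝ) (hU : ContDiff ℝ 1 U)
    (hπ : Integrable (fun p : (Fin n → ℝ) × (Fin n → ℝ) => jointDensity τ₁ τ₂ U p.1 p.2))
    (μ : Measure ((Fin n → ℝ) × (Fin n → ℝ)))
    (hμ : μ = (ENNReal.ofReal
          (∫ p : (Fin n → ℝ) × (Fin n → ℝ), jointDensity τ₁ τ₂ U p.1 p.2))⁻¹ •
        volume.withDensity (fun p => ENNReal.ofReal (jointDensity τ₁ τ₂ U p.1 p.2)))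
    (f : (Fin n → ℝ) → (Fin n → ℝ) → ℝ)
    (hf : ContDiff ℝ 2 (Function.uncurry f)) (hfc : HasCompactSupport (Function.uncurry f)) :
    (∫ p, carreDuChamp L τ₁ τ₂ c U f p.1 p.2 ∂μ
        = (∫ p, (τ₁ * ∑ i, (sqrtL.mulVec (gradVec (fun x' => f x' p.2) p.1) i) ^ 2
              + τ₂ * ∑ i, (sqrtL.mulVec (gradVec (f p.1) p.2) i) ^ 2) ∂μ)
          + ∫ p, (c / 2) * swapS τ₁ τ₂ U p.1 p.2 * (f p.2 p.1 - f p.1 p.2) ^ 2 ∂μ) ∧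
      0 ≤ ∫ p, (τ₁ * ∑ i, (sqrtL.mulVec (gradVec (fun x' => f x' p.2) p.1) i) ^ 2
              + τ₂ * ∑ i, (sqrtL.mulVec (gradVec (f p.1) p.2) i) ^ 2) ∂μ ∧
      0 ≤ ∫ p, (c / 2) * swapS τ₁ τ₂ U p.1 p.2 * (f p.2 p.1 - f p.1 p.2) ^ 2 ∂μ := by
  have hτ₂ : 0 < τ₂ := hτ₁.trans hτ₁₂
  have hFd : Differentiable ℝ (Function.uncurry f) := hf.differentiable (by norm_num)
  set G1 : ((Fin n → ℝ) × (Fin n → ℝ)) → ℝ := fun p =>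
    τ₁ * ∑ i, (sqrtL.mulVec (gradVec (fun x' => f x' p.2) p.1) i) ^ 2
      + τ₂ * ∑ i, (sqrtL.mulVec (gradVec (f p.1) p.2) i) ^ 2 with hG1def
  set G2 : ((Fin n → ℝ) × (Fin n → ℝ)) → ℝ := fun p =>
    (c / 2) * swapS τ₁ τ₂ U p.1 p.2 * (f p.2 p.1 - f p.1 p.2) ^ 2 with hG2def
  -- pointwise decomposition
  have hpt : ∀ p : (Fin n → ℝ) × (Fin n → ℝ),
      carreDuChamp L τ₁ τ₂ c U f p.1 p.2 = G1 p + G2 p := by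
    intro p
    rw [carre_eq L τ₁ τ₂ c U f hf p.1 p.2, ← hsq,
      quad_sqrt sqrtL hsqrtL.1, quad_sqrt sqrtL hsqrtL.1]
  -- μ is a finite measure
  haveI : IsFiniteMeasure μ := by
    constructor
    have hlin : ∫⁻ p : (Fin n → ℝ) × (Fin n → ℝ),
          ENNReal.ofReal (jointDensity τ₁ τ₂ U p.1 p.2)
        = ENNReal.ofReal (∫ p : (Fin n → ℝ) × (Fin n → ℝ), jointDensity τ₁ τ₂ U p.1 p.2) :=
      (MeasureTheory.ofReal_integral_eq_lintegral_ofReal hπ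
        (Filter.Eventually.of_forall fun p => (Real.exp_pos _).le)).symm
    have huniv : μ Set.univ
        = (ENNReal.ofReal (∫ p : (Fin n → ℝ) × (Fin n → ℝ), jointDensity τ₁ τ₂ U p.1 p.2))⁻¹
          * ENNReal.ofReal (∫ p : (Fin n → ℝ) × (Fin n → ℝ), jointDensity τ₁ τ₂ U p.1 p.2) := by
      rw [hμ, Measure.smul_apply, MeasureTheory.withDensity_apply _ MeasurableSet.univ,
        Measure.restrict_univ, hlin, smul_eq_mul]
    rcases eq_or_ne (ENNReal.ofReal
        (∫ p : (Fin n → ℝ) × (Fin n → ℝ), jointDensity τ₁ τ₂ U p.1 p.2)) 0 with h0 | h0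
    · rw [huniv, h0, mul_zero]; exact ENNReal.zero_lt_top
    · rw [huniv, ENNReal.inv_mul_cancel h0 ENNReal.ofReal_ne_top]
      exact ENNReal.one_lt_top
  -- swap-function nonnegativity
  have hsnn : ∀ x y : Fin n → ℝ, 0 ≤ swapS τ₁ τ₂ U x y := fun x y =>
    le_min zero_le_one (Real.exp_pos _).le
  -- regularity of G1
  have hfderivC : Continuous (fderiv ℝ (Function.uncurry f)) :=
    (hf.fderiv_right (m := 1) (by norm_num)).continuous
  have hG1eq : G1 = fun p : (Fin n → ℝ) × (Fin n → ℝ) =>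
      τ₁ * ∑ i, (∑ j, sqrtL i j *
          fderiv ℝ (Function.uncurry f) p (Pi.single j 1, 0)) ^ 2
        + τ₂ * ∑ i, (∑ j, sqrtL i j *
          fderiv ℝ (Function.uncurry f) p (0, Pi.single j 1)) ^ 2 := by
    funext p
    simp only [hG1def, Matrix.mulVec, dotProduct, gradVec_fst f hFd, gradVec_snd f hFd,
      Prod.mk.eta]
  have hG1cont : Continuous G1 := by
    rw [hG1eq]
    refine Continuous.add (continuous_const.mul ?_) (continuous_const.mul ?_) <;>
    · refine continuous_finset_sum _ fun i _ => (continuous_finset_sum _ fun j _ => ?_).pow 2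
      exact continuous_const.mul
        ((ContinuousLinearMap.apply ℝ ℝ _).continuous.comp hfderivC)
  have hG1supp : HasCompactSupport G1 := by
    rw [hG1eq]
    refine HasCompactSupport.intro (hfc.fderiv (𝕜 := ℝ)) fun p hp => ?_
    have h0 : fderiv ℝ (Function.uncurry f) p = 0 := image_eq_zero_of_notMem_tsupport hp
    simp [h0]
  have hi1 : Integrable G1 μ := hG1cont.integrable_of_hasCompactSupport hG1supp
  -- regularity of G2
  have hswapC : Continuous (fun p : (Fin n → ℝ) × (Fin n → ℝ) => swapS τ₁ τ₂ U p.1 p.2) := by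
    unfold swapS
    exact continuous_const.min (Real.continuous_exp.comp (continuous_const.mul
      ((hU.continuous.comp continuous_fst).sub (hU.continuous.comp continuous_snd))))
  have hfcont : Continuous (Function.uncurry f) := hf.continuous
  have hG2cont : Continuous G2 := by
    rw [hG2def]
    exact ((continuous_const.mul hswapC).mul
      (((hfcont.comp continuous_swap).sub hfcont).pow 2))
  have hswapsupp : HasCompactSupport
      ((Function.uncurry f) ∘ (Homeomorph.prodComm (Fin n → ℝ) (Fin n → ℝ))) :=
    hfc.comp_homeomorph _
  have hG2supp : HasCompactSupport G2 := by
    refine HasCompactSupport.intro (hfc.union hswapsupp) fun p hp => ?_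
    rw [Set.mem_union] at hp
    push_neg at hp
    have h1 : f p.1 p.2 = 0 := by
      have := image_eq_zero_of_notMem_tsupport hp.1
      simpa [Function.uncurry] using this
    have h2 : f p.2 p.1 = 0 := by
      have := image_eq_zero_of_notMem_tsupport hp.2
      simpa [Function.uncurry, Homeomorph.prodComm] using this
    simp [hG2def, h1, h2]
  have hi2 : Integrable G2 μ := hG2cont.integrable_of_hasCompactSupport hG2supp
  refine ⟨?_, ?_, ?_⟩
  · calc ∫ p, carreDuChamp L τ₁ τ₂ c U f p.1 p.2 ∂μ
        = ∫ p, (G1 p + G2 p) ∂μ :=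
          integral_congr_ae (Filter.Eventually.of_forall hpt)
      _ = (∫ p, G1 p ∂μ) + ∫ p, G2 p ∂μ := integral_add hi1 hi2
  · exact integral_nonneg fun p => add_nonneg
      (mul_nonneg hτ₁.le (Finset.sum_nonneg fun i _ => sq_nonneg _))
      (mul_nonneg hτ₂.le (Finset.sum_nonneg fun i _ => sq_nonneg _))
  · exact integral_nonneg fun p => mul_nonneg
      (mul_nonneg (by linarith) (hsnn _ _)) (sq_nonneg _)
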